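/- arXiv:1709.08533 — 3 statements merged into one kernel-verified Lean document; each statement's English description precedes it below -/
import Mathlib

section
/- In any condition algebra M (in the total, unrestricted sense) that additionally satisfies the copy equation A⁰A¹ = A for all A ∈ M: the inversion behaves as a group inverse, i.e. A·A⁻ = I for all A ∈ M. -/
/-- A condition algebra (in the total, unrestricted sense): a commutative
monoid with an inversion and two copy operations. -/
class ConditionAlgebra (M : Type*) extends CommMonoid M where
  inv : M → M
  c0 : M → M
  c1 : M → M
  inv_inv : ∀ A : M, inv (inv A) = A
  inv_mul : ∀ A B : M, inv (A * B) = inv A * inv B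
  c0_mul : ∀ A B : M, c0 (A * B) = c0 A * c0 B
  c1_mul : ∀ A B : M, c1 (A * B) = c1 A * c1 B
  copy_cancel : ∀ A : M, c0 A * inv (c1 A) = 1

open ConditionAlgebra in
/-- With the copy equation A⁰A¹ = A, inversion behaves as a group inverse. -/
theorem inv_is_group_inverse (M : Type*) [ConditionAlgebra M]
    (copy_eq : ∀ A : M, c0 A * c1 A = A) :
    ∀ A : M, A * inv A = 1 := by
  -- a := c0 1, b := c1 1 are idempotent and a * b = 1, hence a = b = 1.
  have ha : c0 (1 : M) * c0 (1 : M) = c0 (1 : M) := by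
    rw [← c0_mul, one_mul]
  have hb : c1 (1 : M) * c1 (1 : M) = c1 (1 : M) := by
    rw [← c1_mul, one_mul]
  have hab : c0 (1 : M) * c1 (1 : M) = 1 := by
    rw [copy_eq]
  have ha1 : c0 (1 : M) = 1 := by
    calc c0 (1 : M) = c0 1 * 1 := (mul_one _).symm
    _ = c0 1 * (c0 1 * c1 1) := by rw [hab]
    _ = (c0 1 * c0 1) * c1 1 := by ac_rfl
    _ = c0 1 * c1 1 := by rw [ha]
    _ = 1 := hab
  have hb1 : c1 (1 : M) = 1 := by
    rw [ha1, one_mul] at hab; exact hab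
  have hinv1 : inv (1 : M) = 1 := by
    have := copy_cancel (1 : M)
    rwa [ha1, hb1, one_mul] at this
  -- apply inv to copy_cancel to get the swapped cancellation
  have hswap : ∀ A : M, inv (c0 A) * c1 A = 1 := by
    intro A
    have := congrArg inv (copy_cancel A)
    rwa [inv_mul, ConditionAlgebra.inv_inv, hinv1] at this
  intro A
  calc A * inv A = (c0 A * c1 A) * inv (c0 A * c1 A) := by rw [copy_eq]
  _ = (c0 A * c1 A) * (inv (c0 A) * inv (c1 A)) := by rw [inv_mul]
  _ = (c0 A * inv (c1 A)) * (inv (c0 A) * c1 A) := by ac_rfl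
  _ = 1 := by rw [copy_cancel, hswap, one_mul]
end

section
/- In any condition algebra M (in the total, unrestricted sense) that additionally satisfies the copy equation A⁰A¹ = A for all A ∈ M: the two copy operations collapse, i.e. A⁰ = A¹ for every A ∈ M. -/
open ConditionAlgebra in
/-- With the copy equation A⁰A¹ = A, the two copy operations collapse. -/
theorem copies_collapse (M : Type*) [ConditionAlgebra M]
    (copy_eq : ∀ A : M, c0 A * c1 A = A) :
    ∀ A : M, c0 A = c1 A := by
  set e : M := inv 1 with he
  have hinv_e : inv e = 1 := inv_inv (1 : M)
  -- apply `inv` to copy_cancel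
  have h2 : ∀ A : M, inv (c0 A) * c1 A = e := by
    intro A
    have := congrArg inv (copy_cancel A)
    rwa [ConditionAlgebra.inv_mul, ConditionAlgebra.inv_inv] at this
  -- A * inv A = e for all A
  have h3 : ∀ A : M, A * inv A = e := by
    intro A
    calc A * inv A = (c0 A * c1 A) * inv (c0 A * c1 A) := by rw [copy_eq]
      _ = (c0 A * inv (c1 A)) * (inv (c0 A) * c1 A) := by
          rw [ConditionAlgebra.inv_mul, mul_mul_mul_comm, mul_mul_mul_comm (c0 A) (inv (c1 A)),
            mul_comm (c1 A) (inv (c1 A))]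
      _ = 1 * e := by rw [copy_cancel, h2]
      _ = e := one_mul e
  -- c1 A = c0 A * e
  have h4 : ∀ A : M, c1 A = c0 A * e := by
    intro A
    calc c1 A = (c0 A * inv (c1 A)) * c1 A := by rw [copy_cancel, one_mul]
      _ = c0 A * (c1 A * inv (c1 A)) := by
          rw [mul_assoc, mul_comm (inv (c1 A)) (c1 A)]
      _ = c0 A * e := by rw [h3]
  -- e = 1
  have h5 : (1 : M) = e := by
    calc (1 : M) = c0 1 * inv (c1 1) := (copy_cancel 1).symm
      _ = c0 1 * inv (c0 1 * e) := by rw [h4]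
      _ = (c0 1 * inv (c0 1)) * inv e := by rw [inv_mul, mul_assoc]
      _ = e * 1 := by rw [h3, hinv_e]
      _ = e := mul_one e
  intro A
  rw [h4, ← h5, mul_one]
end

section
/- For all constructor numbers x and y (over a fixed condition algebra C), the CN term (x + y⁰) − y¹ equality-reduces to x, i.e. (x + y⁰) − y¹ →̲ x. -/
/-- A condition algebra with bracket: a commutative monoid with inversion,
two copy operations, and a bracket operation. -/
class CondAlg (C : Type*) extends CommMonoid C where
  inv : C → C
  c0 : C → C
  c1 : C → C
  brkt : C → C
  inv_inv : ∀ A : C, inv (inv A) = A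
  inv_mul : ∀ A B : C, inv (A * B) = inv A * inv B
  c0_mul : ∀ A B : C, c0 (A * B) = c0 A * c0 B
  c1_mul : ∀ A B : C, c1 (A * B) = c1 A * c1 B
  copy_cancel : ∀ A : C, c0 A * inv (c1 A) = 1
  copy_eq : ∀ A : C, c0 A * c1 A = A
  brkt_one : brkt (1 : C) = 1
  brkt_mul : ∀ A B : C, brkt A * brkt B = brkt (A * B)

/-- CN number terms over the condition algebra `C`. -/
inductive CN (C : Type*) : Type _
  | zero : C → CN C                 -- A·0
  | suc : C → CN C → CN C           -- (A suc)a
  | ann : C → C → CN C → CN C       -- (A,B ann)a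
  | copy0 : CN C → CN C             -- a⁰
  | copy1 : CN C → CN C             -- a¹
  | add : CN C → CN C → CN C        -- a + b
  | sub : CN C → CN C → CN C        -- a − b

variable {C : Type*} [CondAlg C]

open CondAlg

/-- CNSmooth equality `≃` on CN number terms. -/
inductive CNSmooth : CN C → CN C → Prop
  | refl (a : CN C) : CNSmooth a a
  | symm {a b} : CNSmooth a b → CNSmooth b a
  | trans {a b c} : CNSmooth a b → CNSmooth b c → CNSmooth a c
  -- congruence rules
  | suc_congr (A : C) {a b} : CNSmooth a b → CNSmooth (.suc A a) (.suc A b)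
  | ann_congr (A B : C) {a b} : CNSmooth a b → CNSmooth (.ann A B a) (.ann A B b)
  | copy0_congr {a b} : CNSmooth a b → CNSmooth (.copy0 a) (.copy0 b)
  | copy1_congr {a b} : CNSmooth a b → CNSmooth (.copy1 a) (.copy1 b)
  | add_congr {a a' b b'} : CNSmooth a a' → CNSmooth b b' →
      CNSmooth (.add a b) (.add a' b')
  | sub_congr {a a' b b'} : CNSmooth a a' → CNSmooth b b' →
      CNSmooth (.sub a b) (.sub a' b')
  -- exchange laws
  | exch_suc_suc (A B : C) (a : CN C) :
      CNSmooth (.suc A (.suc B a)) (.suc B (.suc A a))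
  | exch_ann_suc (A₀ A₁ B : C) (a : CN C) :
      CNSmooth (.ann A₀ A₁ (.suc B a)) (.suc B (.ann A₀ A₁ a))
  | exch_ann_ann (A₀ A₁ B₀ B₁ : C) (a : CN C) :
      CNSmooth (.ann A₀ A₁ (.ann B₀ B₁ a)) (.ann B₀ B₁ (.ann A₀ A₁ a))
  | exch_ann_ann' (A₀ A₁ B₀ B₁ : C) (a : CN C) :
      CNSmooth (.ann A₀ A₁ (.ann B₀ B₁ a)) (.ann A₀ B₁ (.ann B₀ A₁ a))
  | exch_suc_ann (A B₀ B₁ : C) (a : CN C) :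
      CNSmooth (.suc A (.ann B₀ B₁ a)) (.suc B₀ (.ann A B₁ a))
  -- bracket laws
  | brkt_zero (A : C) : CNSmooth (.zero A) (.zero (brkt A))
  | brkt_suc (A : C) (a : CN C) : CNSmooth (.suc A a) (.suc (brkt A) a)
  | brkt_ann_left (A B : C) (a : CN C) :
      CNSmooth (.ann A B a) (.ann (brkt A) B a)
  | brkt_ann_right (A B : C) (a : CN C) :
      CNSmooth (.ann A B a) (.ann A (brkt B) a)
  -- copy-distribution laws
  | copy0_zero (A : C) : CNSmooth (.copy0 (.zero A)) (.zero (c0 A))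
  | copy1_zero (A : C) : CNSmooth (.copy1 (.zero A)) (.zero (c1 A))
  | copy0_suc (A : C) (a : CN C) :
      CNSmooth (.copy0 (.suc A a)) (.suc (c0 A) (.copy0 a))
  | copy1_suc (A : C) (a : CN C) :
      CNSmooth (.copy1 (.suc A a)) (.suc (c1 A) (.copy1 a))
  | copy0_ann (A B : C) (a : CN C) :
      CNSmooth (.copy0 (.ann A B a)) (.ann (c0 A) (c0 B) (.copy0 a))
  | copy1_ann (A B : C) (a : CN C) :
      CNSmooth (.copy1 (.ann A B a)) (.ann (c1 A) (c1 B) (.copy1 a))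
  -- inversion-simplification
  | inv_simp (A B : C) (a : CN C) (h : A * inv B = 1) :
      CNSmooth (.ann A B a) a

/-- Equality reduction `→̲`: the smallest reflexive, transitive, congruent
relation containing smooth equality and all instances of the addition and
subtraction program rules. -/
inductive CNEqRed : CN C → CN C → Prop
  | refl (a : CN C) : CNEqRed a a
  | trans {a b c} : CNEqRed a b → CNEqRed b c → CNEqRed a c
  -- contains smooth equality
  | of_smooth {a b} : CNSmooth a b → CNEqRed a b
  -- congruence rules
  | suc_congr (A : C) {a b} : CNEqRed a b → CNEqRed (.suc A a) (.suc A b)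
  | ann_congr (A B : C) {a b} : CNEqRed a b → CNEqRed (.ann A B a) (.ann A B b)
  | copy0_congr {a b} : CNEqRed a b → CNEqRed (.copy0 a) (.copy0 b)
  | copy1_congr {a b} : CNEqRed a b → CNEqRed (.copy1 a) (.copy1 b)
  | add_congr {a a' b b'} : CNEqRed a a' → CNEqRed b b' →
      CNEqRed (.add a b) (.add a' b')
  | sub_congr {a a' b b'} : CNEqRed a a' → CNEqRed b b' →
      CNEqRed (.sub a b) (.sub a' b')
  -- addition program rules
  | add_suc (X : C) (x y : CN C) :
      CNEqRed (.add (.suc X x) y) (.suc X (.add x y))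
  | add_ann (X₀ X₁ : C) (x y : CN C) :
      CNEqRed (.add (.ann X₀ X₁ x) y) (.ann X₀ X₁ (.add x y))
  | add_zero_suc (X Y : C) (y : CN C) :
      CNEqRed (.add (.zero X) (.suc Y y)) (.suc Y (.add (.zero X) y))
  | add_zero_ann (X Y₀ Y₁ : C) (y : CN C) :
      CNEqRed (.add (.zero X) (.ann Y₀ Y₁ y)) (.ann Y₀ Y₁ (.add (.zero X) y))
  | add_zero_zero (X Y : C) :
      CNEqRed (.add (.zero X) (.zero Y)) (.zero (CondAlg.brkt (X * Y)))
  -- subtraction program rules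
  | sub_suc_suc (X Y : C) (x y : CN C) :
      CNEqRed (.sub (.suc X x) (.suc Y y)) (.ann X Y (.sub x y))
  | sub_ann (Y₀ Y₁ : C) (x y : CN C) :
      CNEqRed (.sub x (.ann Y₀ Y₁ y)) (.ann Y₁ Y₀ (.sub x y))
  | sub_suc_zero (X Y : C) (x : CN C) :
      CNEqRed (.sub (.suc X x) (.zero Y)) (.suc X (.sub x (.zero Y)))
  | sub_zero_zero (X Y : C) :
      CNEqRed (.sub (.zero X) (.zero Y)) (.zero (CondAlg.brkt (X * CondAlg.inv Y)))
  | sub_ann_left (X₀ X₁ : C) (x y : CN C) :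
      CNEqRed (.sub (.ann X₀ X₁ x) y) (.ann X₀ X₁ (.sub x y))

/-- Constructor numbers: CN terms built only from the constructors
`A·0`, `(A suc)a`, `(A,B ann)a`. -/
inductive IsCon : CN C → Prop
  | zero (A : C) : IsCon (.zero A)
  | suc (A : C) {a} : IsCon a → IsCon (.suc A a)
  | ann (A B : C) {a} : IsCon a → IsCon (.ann A B a)


section Aux

lemma CondAlg.inv_one : CondAlg.inv (1 : C) = 1 := by
  have h := CondAlg.inv_mul (1 : C) (CondAlg.inv (1 : C))
  rw [one_mul, CondAlg.inv_inv, mul_one] at h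
  exact h.symm

lemma CondAlg.copy_cancel' (A : C) : CondAlg.c1 A * CondAlg.inv (CondAlg.c0 A) = 1 := by
  have h := congrArg CondAlg.inv (CondAlg.copy_cancel A)
  rw [CondAlg.inv_mul, CondAlg.inv_inv, CondAlg.inv_one, mul_comm] at h
  exact h

/-- Structural copy-0 of a constructor number. -/
def c0N : CN C → CN C
  | .zero A => .zero (CondAlg.c0 A)
  | .suc A a => .suc (CondAlg.c0 A) (c0N a)
  | .ann A B a => .ann (CondAlg.c0 A) (CondAlg.c0 B) (c0N a)
  | a => a

/-- Structural copy-1 of a constructor number. -/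
def c1N : CN C → CN C
  | .zero A => .zero (CondAlg.c1 A)
  | .suc A a => .suc (CondAlg.c1 A) (c1N a)
  | .ann A B a => .ann (CondAlg.c1 A) (CondAlg.c1 B) (c1N a)
  | a => a

/-- Push the constructors of `x` outside an addition. -/
def push : CN C → CN C → CN C
  | .zero X, m => .add (.zero X) m
  | .suc X x, m => .suc X (push x m)
  | .ann X₀ X₁ x, m => .ann X₀ X₁ (push x m)
  | _, m => m

lemma smooth_copy0 {y : CN C} (hy : IsCon y) : CNSmooth (.copy0 y) (c0N y) := by
  induction hy with
  | zero A => exact CNSmooth.copy0_zero A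
  | suc A h ih => exact (CNSmooth.copy0_suc A _).trans (CNSmooth.suc_congr _ ih)
  | ann A B h ih => exact (CNSmooth.copy0_ann A B _).trans (CNSmooth.ann_congr _ _ ih)

lemma smooth_copy1 {y : CN C} (hy : IsCon y) : CNSmooth (.copy1 y) (c1N y) := by
  induction hy with
  | zero A => exact CNSmooth.copy1_zero A
  | suc A h ih => exact (CNSmooth.copy1_suc A _).trans (CNSmooth.suc_congr _ ih)
  | ann A B h ih => exact (CNSmooth.copy1_ann A B _).trans (CNSmooth.ann_congr _ _ ih)

lemma red_push {x : CN C} (hx : IsCon x) (m : CN C) :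
    CNEqRed (.add x m) (push x m) := by
  induction hx generalizing m with
  | zero A => exact CNEqRed.refl _
  | suc A h ih => exact (CNEqRed.add_suc _ _ _).trans (CNEqRed.suc_congr _ (ih m))
  | ann A B h ih => exact (CNEqRed.add_ann _ _ _ _).trans (CNEqRed.ann_congr _ _ (ih m))

lemma push_suc {x : CN C} (hx : IsCon x) (B : C) (m : CN C) :
    CNEqRed (push x (.suc B m)) (.suc B (push x m)) := by
  induction hx with
  | zero A => exact CNEqRed.add_zero_suc _ _ _
  | suc A h ih =>
      exact (CNEqRed.suc_congr _ ih).trans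
        (CNEqRed.of_smooth (CNSmooth.exch_suc_suc _ _ _))
  | ann A B' h ih =>
      exact (CNEqRed.ann_congr _ _ ih).trans
        (CNEqRed.of_smooth (CNSmooth.exch_ann_suc _ _ _ _))

lemma push_ann {x : CN C} (hx : IsCon x) (B₀ B₁ : C) (m : CN C) :
    CNEqRed (push x (.ann B₀ B₁ m)) (.ann B₀ B₁ (push x m)) := by
  induction hx with
  | zero A => exact CNEqRed.add_zero_ann _ _ _ _
  | suc A h ih =>
      exact (CNEqRed.suc_congr _ ih).trans
        (CNEqRed.of_smooth ((CNSmooth.exch_ann_suc _ _ _ _).symm))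
  | ann A B h ih =>
      exact (CNEqRed.ann_congr _ _ ih).trans
        (CNEqRed.of_smooth (CNSmooth.exch_ann_ann _ _ _ _ _))

lemma push_zero_sub {x : CN C} (hx : IsCon x) {B₀ B₁ : C}
    (hB : B₀ * CondAlg.inv B₁ = 1) :
    CNEqRed (.sub (push x (.zero B₀)) (.zero B₁)) x := by
  induction hx with
  | zero X =>
      have h1 : CNEqRed (push (CN.zero X) (CN.zero B₀)) (CN.zero (X * B₀)) :=
        (CNEqRed.add_zero_zero X B₀).trans
          (CNEqRed.of_smooth ((CNSmooth.brkt_zero (X * B₀)).symm))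
      have h2 : CNEqRed (CN.sub (CN.zero (X * B₀)) (CN.zero B₁))
          (CN.zero (CondAlg.brkt (X * B₀ * CondAlg.inv B₁))) :=
        CNEqRed.sub_zero_zero _ _
      have hXB : X * B₀ * CondAlg.inv B₁ = X := by
        rw [mul_assoc, hB, mul_one]
      refine (CNEqRed.sub_congr h1 (CNEqRed.refl _)).trans (h2.trans ?_)
      rw [hXB]
      exact CNEqRed.of_smooth ((CNSmooth.brkt_zero X).symm)
  | suc A h ih =>
      exact (CNEqRed.sub_suc_zero _ _ _).trans (CNEqRed.suc_congr _ ih)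
  | ann A B h ih =>
      exact (CNEqRed.sub_ann_left _ _ _ _).trans (CNEqRed.ann_congr _ _ ih)

lemma main_push {y : CN C} (hy : IsCon y) :
    ∀ {x : CN C}, IsCon x → CNEqRed (.sub (push x (c0N y)) (c1N y)) x := by
  induction hy with
  | zero A =>
      intro x hx
      exact push_zero_sub hx (CondAlg.copy_cancel A)
  | suc A h ih =>
      intro x hx
      refine (CNEqRed.sub_congr (push_suc hx _ _) (CNEqRed.refl _)).trans ?_
      refine (CNEqRed.sub_suc_suc _ _ _ _).trans ?_
      refine (CNEqRed.ann_congr _ _ (ih hx)).trans ?_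
      exact CNEqRed.of_smooth (CNSmooth.inv_simp _ _ _ (CondAlg.copy_cancel A))
  | ann A B h ih =>
      intro x hx
      refine (CNEqRed.sub_ann _ _ _ _).trans ?_
      refine (CNEqRed.ann_congr _ _
        (CNEqRed.sub_congr (push_ann hx _ _ _) (CNEqRed.refl _))).trans ?_
      refine (CNEqRed.ann_congr _ _ (CNEqRed.sub_ann_left _ _ _ _)).trans ?_
      refine (CNEqRed.ann_congr _ _ (CNEqRed.ann_congr _ _ (ih hx))).trans ?_
      refine (CNEqRed.of_smooth (CNSmooth.exch_ann_ann' _ _ _ _ _)).trans ?_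
      refine (CNEqRed.ann_congr _ _
        (CNEqRed.of_smooth (CNSmooth.inv_simp _ _ _ (CondAlg.copy_cancel A)))).trans ?_
      exact CNEqRed.of_smooth (CNSmooth.inv_simp _ _ _ (CondAlg.copy_cancel' B))

end Aux

/-- `(x + y⁰) − y¹ →̲ x` for all constructor numbers `x, y`. -/
theorem add_sub_copies (x y : CN C) (hx : IsCon x) (hy : IsCon y) :
    CNEqRed (.sub (.add x (.copy0 y)) (.copy1 y)) x := by
  refine (CNEqRed.sub_congr
    (CNEqRed.add_congr (CNEqRed.refl x) (CNEqRed.of_smooth (smooth_copy0 hy)))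
    (CNEqRed.of_smooth (smooth_copy1 hy))).trans ?_
  refine (CNEqRed.sub_congr (red_push hx _) (CNEqRed.refl _)).trans ?_
  exact main_push hy hx
end
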